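/- In the limit where p_F(β_H, ν_2) → 1, p_F(β_C, ν_1) → 0 (via ν_2 → +∞, ν_1 → −∞), the heat Q_H absorbed from the hot bath converges to (1/β_H) h(d,N) + ∑_{k=1}^N [kħω/(e^{kβ_Hħω}−1) − kħω/(e^{kβ_Cħω}−1)]. -/

import Mathlib

open Real Filter Finset

/-- Logistic fermionic overlap. -/
noncomputable def pF (hbarω : ℝ) (d N : ℕ) (β ν : ℝ) : ℝ :=
  1 / (1 + Real.exp ((N : ℝ) * ((N : ℝ) - 1) * β * hbarω / 2 - β * ν
    - (Real.log (Nat.choose (d + N - 1) N : ℝ) - Real.log (Nat.choose d N : ℝ))))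

/-- Fermionic internal energy of `N` particles in a 1D harmonic trap. -/
noncomputable def UF (hbarω : ℝ) (N : ℕ) (β : ℝ) : ℝ :=
  hbarω * (N : ℝ) ^ 2 / 2
    + ∑ k ∈ Finset.Icc 1 N, (k : ℝ) * hbarω / (Real.exp ((k : ℝ) * β * hbarω) - 1)

/-- Bosonic internal energy of `N` particles in a 1D harmonic trap. -/
noncomputable def UB (hbarω : ℝ) (N : ℕ) (β : ℝ) : ℝ :=
  hbarω * (N : ℝ) / 2
    + ∑ k ∈ Finset.Icc 1 N, (k : ℝ) * hbarω / (Real.exp ((k : ℝ) * β * hbarω) - 1)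

/-- Internal energy of Hamiltonian anyons. -/
noncomputable def Uanyon (hbarω : ℝ) (d N : ℕ) (β ν : ℝ) : ℝ :=
  pF hbarω d N β ν * UF hbarω N β + (1 - pF hbarω d N β ν) * (ν + UB hbarω N β)


private lemma aux_mul_exp_top (b : ℝ) (hb : 0 < b) :
    Tendsto (fun x : ℝ => x * Real.exp (-(b*x))) atTop (nhds 0) := by
  have h1 : Tendsto (fun x : ℝ => b * x) atTop atTop := tendsto_id.const_mul_atTop hb
  have h2 := (Real.tendsto_pow_mul_exp_neg_atTop_nhds_zero 1).comp h1
  have h3 := h2.const_mul (1/b)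
  simp only [mul_zero] at h3
  refine h3.congr fun x => ?_
  simp only [Function.comp, pow_one]
  field_simp

private lemma aux_mul_exp_bot (b : ℝ) (hb : 0 < b) :
    Tendsto (fun x : ℝ => x * Real.exp (b*x)) atBot (nhds 0) := by
  have h1 := (aux_mul_exp_top b hb).comp tendsto_neg_atBot_atTop
  have h2 := h1.neg
  simp only [neg_zero] at h2
  refine h2.congr fun x => ?_
  simp only [Function.comp]
  ring_nf

theorem stirling_heat_limit (βH βC hbarω : ℝ) (hβH : 0 < βH) (hβC : 0 < βC)
    (hhbarω : 0 < hbarω) (d N : ℕ) (hN : 1 ≤ N) (hd : N ≤ d) :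
    Filter.Tendsto
      (fun p : ℝ × ℝ =>
        Uanyon hbarω d N βH p.2 - Uanyon hbarω d N βC p.1
          + (1 / βH) * Real.log (pF hbarω d N βH p.1 / pF hbarω d N βH p.2))
      (Filter.atBot ×ˢ Filter.atTop)
      (nhds ((1 / βH) *
          (Real.log (Nat.choose (d + N - 1) N : ℝ) - Real.log (Nat.choose d N : ℝ))
        + ∑ k ∈ Finset.Icc 1 N,
            ((k : ℝ) * hbarω / (Real.exp ((k : ℝ) * βH * hbarω) - 1)
              - (k : ℝ) * hbarω / (Real.exp ((k : ℝ) * βC * hbarω) - 1)))) := by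
  set AH : ℝ := (N : ℝ) * ((N : ℝ) - 1) * βH * hbarω / 2 with hAH
  set AC : ℝ := (N : ℝ) * ((N : ℝ) - 1) * βC * hbarω / 2 with hAC
  set L : ℝ := Real.log (Nat.choose (d + N - 1) N : ℝ) - Real.log (Nat.choose d N : ℝ) with hL
  set l : Filter (ℝ × ℝ) := (atBot : Filter ℝ) ×ˢ (atTop : Filter ℝ) with hl
  -- affine limits
  have haffH : Tendsto (fun t : ℝ => AH - βH*t - L) atTop atBot := by
    have h1 : Tendsto (fun t : ℝ => βH * t) atTop atTop := tendsto_id.const_mul_atTop hβH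
    have h2 := tendsto_neg_atTop_atBot.comp h1
    have h3 := tendsto_atBot_add_const_left atTop (AH - L) h2
    refine h3.congr fun t => ?_
    simp only [Function.comp]; ring
  have haffC : Tendsto (fun t : ℝ => AC - βC*t - L) atBot atTop := by
    have h1 : Tendsto (fun t : ℝ => βC * t) atBot atBot := tendsto_id.const_mul_atBot hβC
    have h2 := tendsto_neg_atBot_atTop.comp h1
    have h3 := tendsto_atTop_add_const_left atBot (AC - L) h2
    refine h3.congr fun t => ?_
    simp only [Function.comp]; ring
  have haffz : Tendsto (fun t : ℝ => βH*t - AH + L) atBot atBot := by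
    have h1 : Tendsto (fun t : ℝ => βH * t) atBot atBot := tendsto_id.const_mul_atBot hβH
    have h3 := tendsto_atBot_add_const_right atBot (-AH + L) h1
    refine h3.congr fun t => ?_; ring
  have hy : Tendsto (fun p : ℝ × ℝ => Real.exp (AH - βH*p.2 - L)) l (nhds 0) :=
    Real.tendsto_exp_atBot.comp (haffH.comp tendsto_snd)
  have hx : Tendsto (fun p : ℝ × ℝ => Real.exp (AC - βC*p.1 - L)) l atTop :=
    Real.tendsto_exp_atTop.comp (haffC.comp tendsto_fst)
  have hz : Tendsto (fun p : ℝ × ℝ => Real.exp (βH*p.1 - AH + L)) l (nhds 0) :=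
    Real.tendsto_exp_atBot.comp (haffz.comp tendsto_fst)
  -- pF limits
  have hpF2 : Tendsto (fun p : ℝ × ℝ => 1/(1 + Real.exp (AH - βH*p.2 - L))) l (nhds 1) := by
    have hadd : Tendsto (fun t : ℝ => 1+t) (nhds 0) (nhds 1) := by
      have h := ((continuous_const (y := (1:ℝ))).add continuous_id).tendsto (0:ℝ)
      simpa [Pi.add_def] using h
    have hc := hadd.inv₀ one_ne_zero
    simp only [inv_one] at hc
    have := hc.comp hy
    simpa [one_div, Function.comp_def] using this
  have hpF1 : Tendsto (fun p : ℝ × ℝ => 1/(1 + Real.exp (AC - βC*p.1 - L))) l (nhds 0) := by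
    have h1 := tendsto_atTop_add_const_left l (1:ℝ) hx
    have := tendsto_inv_atTop_zero.comp h1
    simpa [one_div, Function.comp_def] using this
  have hlogy : Tendsto (fun p : ℝ × ℝ => Real.log (1 + Real.exp (AH - βH*p.2 - L))) l (nhds 0) := by
    have h0 := (tendsto_const_nhds (x := (1:ℝ))).add hy
    rw [add_zero] at h0
    have hc := ((Real.continuousAt_log (x := (1:ℝ)) one_ne_zero).tendsto).comp h0
    simpa [Real.log_one, Function.comp_def] using hc
  have hlogz : Tendsto (fun p : ℝ × ℝ => Real.log (1 + Real.exp (βH*p.1 - AH + L))) l (nhds 0) := by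
    have h0 := (tendsto_const_nhds (x := (1:ℝ))).add hz
    rw [add_zero] at h0
    have hc := ((Real.continuousAt_log (x := (1:ℝ)) one_ne_zero).tendsto).comp h0
    simpa [Real.log_one, Function.comp_def] using hc
  have ht2 : Tendsto (fun p : ℝ × ℝ => Real.exp (AH - βH*p.2 - L) * p.2) l (nhds 0) := by
    have h1 := ((aux_mul_exp_top βH hβH).comp (tendsto_snd : Tendsto Prod.snd l atTop)).const_mul (Real.exp (AH - L))
    simp only [mul_zero] at h1
    refine h1.congr fun p => ?_
    simp only [Function.comp]
    rw [show AH - βH*p.2 - L = (AH - L) + (-(βH*p.2)) by ring, Real.exp_add]; ring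
  have ht4 : Tendsto (fun p : ℝ × ℝ => p.1 * Real.exp (βC*p.1 - AC + L)) l (nhds 0) := by
    have h1 := ((aux_mul_exp_bot βC hβC).comp (tendsto_fst : Tendsto Prod.fst l atBot)).const_mul (Real.exp (-AC + L))
    simp only [mul_zero] at h1
    refine h1.congr fun p => ?_
    simp only [Function.comp]
    rw [mul_left_comm, ← Real.exp_add]
    congr 1
    ring
  set T : ℝ := (1 / βH) * L
        + ∑ k ∈ Finset.Icc 1 N,
            ((k : ℝ) * hbarω / (Real.exp ((k : ℝ) * βH * hbarω) - 1)
              - (k : ℝ) * hbarω / (Real.exp ((k : ℝ) * βC * hbarω) - 1)) with hT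
  have hGval := (((((((((((hpF2.mul (tendsto_const_nhds (x := UF hbarω N βH))).add
      (hpF2.mul ht2)).add
      (((tendsto_const_nhds (x := (1:ℝ))).sub hpF2).mul
        (tendsto_const_nhds (x := UB hbarω N βH)))).sub
      (hpF1.mul (tendsto_const_nhds (x := UF hbarω N βC)))).add
      (((tendsto_const_nhds (x := (1:ℝ))).sub hpF1).mul ht4)).add
      (hpF1.mul (tendsto_const_nhds (x := UB hbarω N βC)))).sub
      (tendsto_const_nhds (x := UB hbarω N βC))).add
      (hlogy.const_mul (1/βH))).sub
      (hlogz.const_mul (1/βH))).sub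
      (tendsto_const_nhds (x := AH/βH))).add
      (tendsto_const_nhds (x := L/βH)))
  have hG2 : Tendsto (fun p : ℝ × ℝ =>
      (1/(1 + Real.exp (AH - βH*p.2 - L))) * UF hbarω N βH
      + (1/(1 + Real.exp (AH - βH*p.2 - L))) * (Real.exp (AH - βH*p.2 - L) * p.2)
      + (1 - 1/(1 + Real.exp (AH - βH*p.2 - L))) * UB hbarω N βH
      - (1/(1 + Real.exp (AC - βC*p.1 - L))) * UF hbarω N βC
      + (1 - 1/(1 + Real.exp (AC - βC*p.1 - L))) * (p.1 * Real.exp (βC*p.1 - AC + L))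
      + (1/(1 + Real.exp (AC - βC*p.1 - L))) * UB hbarω N βC
      - UB hbarω N βC
      + (1/βH) * Real.log (1 + Real.exp (AH - βH*p.2 - L))
      - (1/βH) * Real.log (1 + Real.exp (βH*p.1 - AH + L))
      - AH/βH + L/βH) l (nhds T) := by
    convert hGval using 2
    rw [hT, hAH, Finset.sum_sub_distrib]
    simp only [UF, UB]
    rw [show ((N:ℝ) * ((N:ℝ) - 1) * βH * hbarω / 2)/βH = (N:ℝ)*((N:ℝ)-1)*hbarω/2 by
      field_simp]
    ring
  refine Tendsto.congr (fun p => ?_) hG2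
  have hx0 : (0:ℝ) < 1 + Real.exp (AC - βC*p.1 - L) := by positivity
  have hy0 : (0:ℝ) < 1 + Real.exp (AH - βH*p.2 - L) := by positivity
  have hw0 : (0:ℝ) < 1 + Real.exp (AH - βH*p.1 - L) := by positivity
  have hlogdiv : Real.log ((1/(1 + Real.exp (AH - βH*p.1 - L)))/(1/(1 + Real.exp (AH - βH*p.2 - L))))
      = Real.log (1 + Real.exp (AH - βH*p.2 - L)) - Real.log (1 + Real.exp (AH - βH*p.1 - L)) := by
    rw [Real.log_div (by positivity) (by positivity), one_div, one_div,
      Real.log_inv, Real.log_inv]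
    ring
  have hwz : (1:ℝ) + Real.exp (AH - βH*p.1 - L)
      = Real.exp (AH - βH*p.1 - L) * (1 + Real.exp (βH*p.1 - AH + L)) := by
    rw [mul_add, mul_one, ← Real.exp_add,
      show (AH - βH*p.1 - L) + (βH*p.1 - AH + L) = 0 by ring, Real.exp_zero]
    ring
  have hlogw : Real.log (1 + Real.exp (AH - βH*p.1 - L))
      = (AH - βH*p.1 - L) + Real.log (1 + Real.exp (βH*p.1 - AH + L)) := by
    rw [hwz, Real.log_mul (Real.exp_ne_zero _) (by positivity), Real.log_exp]
  have hxinv : Real.exp (βC*p.1 - AC + L) = (Real.exp (AC - βC*p.1 - L))⁻¹ := by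
    rw [show βC*p.1 - AC + L = -(AC - βC*p.1 - L) by ring, Real.exp_neg]
  simp only [Uanyon, pF]
  rw [← hAH, ← hAC, ← hL, hlogdiv, hlogw, hxinv]
  field_simp
  ring
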